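/- For every n ≥ 1 and every coloring f : [ℕ]ⁿ → ℕ, there exists an f-computable 2-bounded coloring g : [ℕ]^{n+1} → ℕ such that every infinite rainbow for g is, up to removing finitely many elements, an infinite set thin for f. -/

import Mathlib

open Classical Filter

noncomputable section

/-- Codes for partial functions recursive in an oracle. -/
inductive OCode : Type
  | zero | succ | left | right | oracle
  | pair (a b : OCode) | comp (a b : OCode) | prec (a b : OCode) | rfind' (a : OCode)

/-- Evaluation of an oracle code with oracle `O`. -/
def OCode.eval (O : ℕ →. ℕ) : OCode → ℕ →. ℕ
  | .zero => pure 0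
  | .succ => Nat.succ
  | .left => ↑fun n : ℕ => n.unpair.1
  | .right => ↑fun n : ℕ => n.unpair.2
  | .oracle => O
  | .pair a b => fun n => Nat.pair <$> a.eval O n <*> b.eval O n
  | .comp a b => fun n => b.eval O n >>= a.eval O
  | .prec a b => Nat.unpaired fun m n =>
      n.rec (a.eval O m) fun y IH => do let i ← IH; b.eval O (Nat.pair m (Nat.pair y i))
  | .rfind' a => fun n => Nat.rfind fun m => (fun k => k = 0) <$> a.eval O (Nat.pair n m)

/-- An injective numbering of oracle codes. -/
def OCode.encodeC : OCode → ℕ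
  | .zero => Nat.pair 0 0
  | .succ => Nat.pair 1 0
  | .left => Nat.pair 2 0
  | .right => Nat.pair 3 0
  | .oracle => Nat.pair 4 0
  | .pair a b => Nat.pair 5 (Nat.pair a.encodeC b.encodeC)
  | .comp a b => Nat.pair 6 (Nat.pair a.encodeC b.encodeC)
  | .prec a b => Nat.pair 7 (Nat.pair a.encodeC b.encodeC)
  | .rfind' a => Nat.pair 8 a.encodeC

/-- `f` is partial recursive in the oracle `O`. -/
def RecIn (O : ℕ →. ℕ) (f : ℕ →. ℕ) : Prop := ∃ c : OCode, c.eval O = f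

/-- The `e`-th partial function recursive in `O` (`Φ_e^O`). -/
def phi (O : ℕ →. ℕ) (e : ℕ) : ℕ →. ℕ :=
  if h : ∃ c : OCode, c.encodeC = e then h.choose.eval O else fun _ => Part.none

/-- The characteristic function of a set of naturals, as an oracle. -/
def chOracle (X : Set ℕ) : ℕ →. ℕ := fun n => Part.some (if n ∈ X then 1 else 0)

/-- A total function as an oracle. -/
def fnOracle (f : ℕ → ℕ) : ℕ →. ℕ := fun n => Part.some (f n)

/-- A two-variable total function as an oracle. -/
def pairFnOracle (f : ℕ → ℕ → ℕ) : ℕ →. ℕ :=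
  fun n => Part.some (f n.unpair.1 n.unpair.2)

/-- The Turing jump of a set `X` : the halting problem relative to `X`. -/
def jumpSet (X : Set ℕ) : Set ℕ := {e | (phi (chOracle X) e e).Dom}

/-- The effective join of two sets of naturals. -/
def joinSet (A B : Set ℕ) : Set ℕ :=
  {n | (n % 2 = 0 ∧ n / 2 ∈ A) ∨ (n % 2 = 1 ∧ n / 2 ∈ B)}

/-- The join of two oracles. -/
def joinO (O₁ O₂ : ℕ →. ℕ) : ℕ →. ℕ :=
  fun n => if n % 2 = 0 then O₁ (n / 2) else O₂ (n / 2)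

/-- Turing reducibility between sets of naturals. -/
def setLEset (A B : Set ℕ) : Prop :=
  RecIn (chOracle B) (fnOracle fun n => if n ∈ A then 1 else 0)


/-- An increasing list of length `k` with entries from `A`. -/
def incList (A : Set ℕ) (k : ℕ) (l : List ℕ) : Prop :=
  l.length = k ∧ l.Pairwise (· < ·) ∧ ∀ x ∈ l, x ∈ A

/-- A coloring of tuples (coded as lists) as an oracle. -/
def listOracle (f : List ℕ → ℕ) : ℕ →. ℕ :=
  fun n => Part.some (f (Denumerable.ofNat (List ℕ) n))

/-- Auxiliary step function for the 2-bounded coloring. -/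
def gaux (l : List ℕ) (w : ℕ) : ℕ :=
  if w.unpair.1 < w.unpair.2 ∧ l.head? = some w.unpair.2 then
    Encodable.encode (w.unpair.1 :: l.tail)
  else Encodable.encode l

/-- Any (unrelativized) partial recursive function is recursive in any oracle. -/
theorem recIn_of_natPartrec {h : ℕ →. ℕ} (hh : Nat.Partrec h) (O : ℕ →. ℕ) :
    ∃ c : OCode, c.eval O = h := by
  induction hh with
  | zero => exact ⟨.zero, rfl⟩
  | succ => exact ⟨.succ, rfl⟩
  | left => exact ⟨.left, rfl⟩
  | right => exact ⟨.right, rfl⟩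
  | pair _ _ iha ihb =>
      obtain ⟨ca, hca⟩ := iha; obtain ⟨cb, hcb⟩ := ihb
      exact ⟨.pair ca cb, by funext n; simp [OCode.eval, hca, hcb]⟩
  | comp _ _ iha ihb =>
      obtain ⟨ca, hca⟩ := iha; obtain ⟨cb, hcb⟩ := ihb
      exact ⟨.comp ca cb, by funext n; simp [OCode.eval, hca, hcb]⟩
  | prec _ _ iha ihb =>
      obtain ⟨ca, hca⟩ := iha; obtain ⟨cb, hcb⟩ := ihb
      exact ⟨.prec ca cb, by funext n; simp [OCode.eval, hca, hcb]⟩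
  | rfind _ iha =>
      obtain ⟨ca, hca⟩ := iha
      exact ⟨.rfind' ca, by funext n; simp [OCode.eval, hca]⟩

theorem primrec_q : Primrec (fun v : ℕ =>
    gaux (Denumerable.ofNat (List ℕ) v.unpair.1) v.unpair.2) := by
  have hL : Primrec fun v : ℕ => Denumerable.ofNat (List ℕ) v.unpair.1 :=
    (Primrec.ofNat _).comp (Primrec.fst.comp Primrec.unpair)
  have hW : Primrec fun v : ℕ => v.unpair.2 := Primrec.snd.comp Primrec.unpair
  have hx : Primrec fun v : ℕ => v.unpair.2.unpair.1 :=
    Primrec.fst.comp (Primrec.unpair.comp hW)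
  have hy : Primrec fun v : ℕ => v.unpair.2.unpair.2 :=
    Primrec.snd.comp (Primrec.unpair.comp hW)
  have hcond : PrimrecPred fun v : ℕ =>
      v.unpair.2.unpair.1 < v.unpair.2.unpair.2 ∧
        (Denumerable.ofNat (List ℕ) v.unpair.1).head? = some v.unpair.2.unpair.2 :=
    PrimrecPred.and (Primrec.nat_lt.comp hx hy)
      (Primrec.eq.comp (Primrec.list_head?.comp hL) (Primrec.option_some.comp hy))
  have hb1 : Primrec fun v : ℕ =>
      Encodable.encode (v.unpair.2.unpair.1 :: (Denumerable.ofNat (List ℕ) v.unpair.1).tail) :=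
    Primrec.encode.comp (Primrec.list_cons.comp hx (Primrec.list_tail.comp hL))
  have hb2 : Primrec fun v : ℕ => Encodable.encode (Denumerable.ofNat (List ℕ) v.unpair.1) :=
    Primrec.encode.comp hL
  exact (Primrec.ite hcond hb1 hb2).of_eq fun v => by simp [gaux]

/-- For every `n ≥ 1` and coloring of `n`-tuples `f` there is an `f`-computable
2-bounded coloring of `(n+1)`-tuples each of whose infinite rainbows is, up to
finitely many elements, thin for `f`. -/
theorem stmt6 (n : ℕ) (hn : 1 ≤ n) (f : List ℕ → ℕ) :
    ∃ g : List ℕ → ℕ,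
      RecIn (listOracle f) (listOracle g) ∧
      (∀ c : ℕ, {l : List ℕ | incList Set.univ (n + 1) l ∧ g l = c}.encard ≤ 2) ∧
      ∀ R : Set ℕ, R.Infinite →
        (∀ l₁ l₂ : List ℕ, incList R (n + 1) l₁ → incList R (n + 1) l₂ →
          g l₁ = g l₂ → l₁ = l₂) →
        ∃ F : Set ℕ, F.Finite ∧ (R \ F).Infinite ∧
          ∃ c : ℕ, ∀ l : List ℕ, incList (R \ F) n l → f l ≠ c := by
  classical
  refine ⟨fun l => gaux l (f l.tail), ?_, ?_, ?_⟩
  · -- RecIn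
    set p : ℕ → ℕ := fun m => Encodable.encode (Denumerable.ofNat (List ℕ) m).tail with hp_def
    have hp : Primrec p :=
      Primrec.encode.comp (Primrec.list_tail.comp (Primrec.ofNat (List ℕ)))
    set q : ℕ → ℕ := fun v => gaux (Denumerable.ofNat (List ℕ) v.unpair.1) v.unpair.2 with hq_def
    have hq : Primrec q := primrec_q
    obtain ⟨cp, hcp⟩ := recIn_of_natPartrec (Partrec.nat_iff.1 hp.to_comp.partrec) (listOracle f)
    obtain ⟨cq, hcq⟩ := recIn_of_natPartrec (Partrec.nat_iff.1 hq.to_comp.partrec) (listOracle f)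
    obtain ⟨cid, hcid⟩ := recIn_of_natPartrec
      (Partrec.nat_iff.1 (Computable.id (α := ℕ)).partrec) (listOracle f)
    refine ⟨OCode.comp cq (OCode.pair cid (OCode.comp OCode.oracle cp)), ?_⟩
    funext m
    simp only [OCode.eval, hcp, hcq, hcid, listOracle]
    simp [Seq.seq, Part.bind_some, hp_def, hq_def, Denumerable.ofNat_encode, Nat.unpair_pair,
      listOracle]
    show Part.bind (Part.map _ (Part.bind (Part.some _) _)) _ = _
    apply Part.eq_some_iff.2
    refine Part.mem_bind_iff.2 ⟨Nat.pair m (f (Denumerable.ofNat (List ℕ) m).tail), ?_, ?_⟩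
    · refine (Part.mem_map_iff _).2 ⟨f (Denumerable.ofNat (List ℕ) m).tail, ?_, rfl⟩
      refine Part.mem_bind_iff.2 ⟨_, Part.mem_some _, ?_⟩
      show _ ∈ Part.some (f (Denumerable.ofNat (List ℕ) (Encodable.encode _)))
      rw [Denumerable.ofNat_encode]
      exact Part.mem_some _
    · rw [PFun.coe_val, Nat.unpair_pair]
      exact Part.mem_some _
  · -- 2-bounded
    intro c
    set m : List ℕ := Denumerable.ofNat (List ℕ) c with hm
    have hsub : {l : List ℕ | incList Set.univ (n + 1) l ∧ gaux l (f l.tail) = c} ⊆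
        {m, (f m.tail).unpair.2 :: m.tail} := by
      rintro l ⟨-, hgl⟩
      by_cases hc : (f l.tail).unpair.1 < (f l.tail).unpair.2 ∧
          l.head? = some (f l.tail).unpair.2
      · have hml : (f l.tail).unpair.1 :: l.tail = m := by
          rw [hm, ← hgl, gaux, if_pos hc, Denumerable.ofNat_encode]
        cases l with
        | nil => simp at hc
        | cons a t =>
            have htl : m.tail = t := by simp only [← hml, List.tail_cons]
            refine Set.mem_insert_iff.2 (Or.inr (Set.mem_singleton_iff.2 ?_))
            have ha : a = (f t).unpair.2 := by simpa using hc.2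
            rw [htl, ha]
      · refine Set.mem_insert_iff.2 (Or.inl ?_)
        rw [hm, ← hgl, gaux, if_neg hc, Denumerable.ofNat_encode]
    calc {l : List ℕ | incList Set.univ (n + 1) l ∧ gaux l (f l.tail) = c}.encard
        ≤ ({m, (f m.tail).unpair.2 :: m.tail} : Set (List ℕ)).encard := Set.encard_mono hsub
      _ ≤ 2 := by
          refine le_trans (Set.encard_insert_le _ _) ?_
          rw [Set.encard_singleton]
          exact one_add_one_eq_two.le
  · -- rainbows are almost thin
    intro R hR hrain
    obtain ⟨x, hxR⟩ := hR.nonempty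
    obtain ⟨y, hyR, hxy⟩ := hR.exists_gt x
    refine ⟨Set.Iic y, Set.finite_Iic y, hR.diff (Set.finite_Iic y), Nat.pair x y, ?_⟩
    rintro l ⟨hlen, hsort, hmem⟩ hfl
    have hgt : ∀ b ∈ l, y < b := by
      intro b hb
      have := (hmem b hb).2
      simpa using this
    have h1 : incList R (n + 1) (x :: l) := by
      refine ⟨by simp [hlen], ?_, ?_⟩
      · exact List.pairwise_cons.2 ⟨fun b hb => lt_trans hxy (hgt b hb), hsort⟩
      · intro b hb
        rcases List.mem_cons.1 hb with h | h
        · exact h ▸ hxR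
        · exact (hmem b h).1
    have h2 : incList R (n + 1) (y :: l) := by
      refine ⟨by simp [hlen], ?_, ?_⟩
      · exact List.pairwise_cons.2 ⟨fun b hb => hgt b hb, hsort⟩
      · intro b hb
        rcases List.mem_cons.1 hb with h | h
        · exact h ▸ hyR
        · exact (hmem b h).1
    have hne : x ≠ y := ne_of_lt hxy
    have hg : gaux (x :: l) (f (x :: l).tail) = gaux (y :: l) (f (y :: l).tail) := by
      simp only [List.tail_cons, gaux, hfl, Nat.unpair_pair]
      rw [if_neg (by simp [List.head?]; exact fun _ => hne), if_pos (by simp [List.head?, hxy])]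
    have := hrain (x :: l) (y :: l) h1 h2 hg
    exact hne (by injection this)

end
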